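/- Pairwise exchangeability of the feature-response product: Let $X, \tilde{X}$ satisfy the knockoff conditions, let $U \in \mathbb{R}^{n\times(n-2p)}$ be orthonormal with $U^T[X\ \tilde{X}] = 0$, and let $y \sim N(X\beta, \sigma^2 I_n)$. For any subset $\hat{S}$ of null indices (i.e., $\beta_j = 0$ for all $j \in \hat{S}$), the random vector $[\,[X\ \tilde{X}]_{swap(\hat{S})}\ U\,]^T y$ has the same distribution as $[X\ \tilde{X}\ U]^T y$, where $swap(\hat{S})$ exchanges columns $X_j$ and $\tilde{X}_j$ for all $j \in \hat{S}$. -/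

import Mathlib

open Matrix MeasureTheory ProbabilityTheory
open scoped ENNReal Real

namespace KnockoffAux

lemma lintegral_pi_prod {μ : Measure ℝ} [SigmaFinite μ] :
    ∀ (m : ℕ) (f : Fin m → ℝ → ℝ≥0∞), (∀ i, Measurable (f i)) →
      ∫⁻ x, ∏ i, f i (x i) ∂(Measure.pi fun _ : Fin m => μ) = ∏ i, ∫⁻ y, f i y ∂μ := by
  intro m
  induction m with
  | zero =>
    intro f hf
    simp [Measure.pi_of_empty (fun _ : Fin 0 => μ)]
  | succ m ih =>
    intro f hf
    have mp := measurePreserving_piFinSuccAbove (fun _ : Fin (m + 1) => μ) 0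
    set e := MeasurableEquiv.piFinSuccAbove (fun _ : Fin (m + 1) => ℝ) 0 with he
    have hg : Measurable fun x : Fin (m + 1) → ℝ => ∏ i, f i (x i) :=
      Finset.measurable_prod _ fun i _ => (hf i).comp (measurable_pi_apply i)
    rw [← (MeasurePreserving.symm e mp).lintegral_comp hg]
    have h0 : ∀ z : ℝ × (Fin m → ℝ), e.symm z 0 = z.1 := by
      intro z; simp [he, MeasurableEquiv.piFinSuccAbove]
    have hsucc : ∀ (z : ℝ × (Fin m → ℝ)) (j : Fin m),
        e.symm z ((0 : Fin (m+1)).succAbove j) = z.2 j := by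
      intro z j; simp [he, MeasurableEquiv.piFinSuccAbove]
    have hval : ∀ z : ℝ × (Fin m → ℝ),
        (∏ i, f i (e.symm z i)) = f 0 z.1 * ∏ j, f ((0 : Fin (m+1)).succAbove j) (z.2 j) := by
      intro z
      rw [Fin.prod_univ_succAbove _ 0, h0]
      exact congrArg _ (Finset.prod_congr rfl fun j _ => by rw [hsucc])
    simp only [hval]
    rw [lintegral_prod_mul (f := f 0)
      (g := fun y : Fin m → ℝ => ∏ j, f ((0 : Fin (m+1)).succAbove j) (y j))
      (hf 0).aemeasurable
      ((Finset.measurable_prod _ fun j _ => (hf _).comp (measurable_pi_apply j)).aemeasurable)]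
    rw [ih (fun j => f ((0 : Fin (m+1)).succAbove j)) (fun j => hf _), Fin.prod_univ_succAbove _ 0]

lemma pi_withDensity (m : ℕ) (g : ℝ → ℝ≥0∞) (hg : Measurable g)
    [SigmaFinite ((volume : Measure ℝ).withDensity g)] :
    Measure.pi (fun _ : Fin m => (volume : Measure ℝ).withDensity g)
      = (volume : Measure (Fin m → ℝ)).withDensity fun x => ∏ i, g (x i) := by
  refine Measure.pi_eq fun s hs => ?_
  rw [withDensity_apply _ (MeasurableSet.univ_pi hs),
    ← lintegral_indicator (MeasurableSet.univ_pi hs)]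
  have hind : ∀ x : Fin m → ℝ,
      (Set.univ.pi s).indicator (fun x => ∏ i, g (x i)) x = ∏ i, (s i).indicator g (x i) := by
    intro x
    by_cases h : x ∈ Set.univ.pi s
    · rw [Set.indicator_of_mem h]
      exact Finset.prod_congr rfl fun i _ =>
        (Set.indicator_of_mem (h i (Set.mem_univ i)) g).symm
    · rw [Set.indicator_of_notMem h]
      rw [Set.mem_univ_pi] at h
      push_neg at h
      obtain ⟨i, hi⟩ := h
      exact (Finset.prod_eq_zero (Finset.mem_univ i)
        (by rw [Set.indicator_of_notMem hi])).symm
    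
  simp only [hind]
  rw [volume_pi, lintegral_pi_prod m _ (fun i => hg.indicator (hs i))]
  exact Finset.prod_congr rfl fun i _ => by
    rw [lintegral_indicator (hs i), withDensity_apply _ (hs i)]

lemma map_withDensity_equiv {α β : Type*} [MeasurableSpace α] [MeasurableSpace β]
    (μ : Measure α) (e : α ≃ᵐ β) (g : α → ℝ≥0∞) (hg : Measurable g) :
    (μ.withDensity g).map e = (μ.map e).withDensity (g ∘ e.symm) := by
  ext s hs
  rw [Measure.map_apply e.measurable hs, withDensity_apply _ (e.measurable hs),
    withDensity_apply _ hs,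
    setLIntegral_map hs (hg.comp e.symm.measurable) e.measurable]
  refine setLIntegral_congr_fun (e.measurable hs) (fun x _ => ?_)
  simp

lemma pi_dirac (m : ℕ) :
    Measure.pi (fun _ : Fin m => Measure.dirac (0 : ℝ)) = Measure.dirac (0 : Fin m → ℝ) := by
  classical
  refine Measure.pi_eq fun s hs => ?_
  rw [Measure.dirac_apply' _ (MeasurableSet.univ_pi hs)]
  have h1 : ∀ i : Fin m, Measure.dirac (0 : ℝ) (s i) = if (0:ℝ) ∈ s i then 1 else 0 := fun i => by
    rw [Measure.dirac_apply' _ (hs i)]; simp [Set.indicator_apply]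
  rw [Finset.prod_congr rfl (fun i _ => h1 i), Finset.prod_boole, Set.indicator_apply]
  simp [Set.mem_univ_pi]


lemma measurable_mulVec {m : ℕ} (A : Matrix (Fin m) (Fin m) ℝ) :
    Measurable (fun x : Fin m → ℝ => A *ᵥ x) := by
  refine measurable_pi_iff.2 fun i => ?_
  simpa [Matrix.mulVec, dotProduct] using
    Finset.measurable_sum Finset.univ
      (fun j _ => (measurable_pi_apply (X := fun _ : Fin m => ℝ) j).const_mul (A i j))

lemma gaussian_pi_map_orthogonal (m : ℕ) (v : NNReal) (Q : Matrix (Fin m) (Fin m) ℝ)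
    (hQ : Qᵀ * Q = 1) :
    (Measure.pi fun _ : Fin m => gaussianReal 0 v).map (fun x => Q *ᵥ x)
      = Measure.pi fun _ : Fin m => gaussianReal 0 v := by
  have hQQt : Q * Qᵀ = 1 := mul_eq_one_comm.mp hQ
  rcases eq_or_ne v 0 with hv | hv
  · subst hv
    simp only [gaussianReal_zero_var, pi_dirac]
    rw [Measure.map_dirac' (measurable_mulVec Q), Matrix.mulVec_zero]
  -- nonzero variance
  let e : (Fin m → ℝ) ≃ᵐ (Fin m → ℝ) :=
    { toFun := fun x => Q *ᵥ x
      invFun := fun x => Qᵀ *ᵥ x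
      left_inv := fun x => by show Qᵀ *ᵥ (Q *ᵥ x) = x; rw [Matrix.mulVec_mulVec, hQ, Matrix.one_mulVec]
      right_inv := fun x => by show Q *ᵥ (Qᵀ *ᵥ x) = x; rw [Matrix.mulVec_mulVec, hQQt, Matrix.one_mulVec]
      measurable_toFun := measurable_mulVec Q
      measurable_invFun := measurable_mulVec Qᵀ }
  have hcoe : (fun x : Fin m → ℝ => Q *ᵥ x) = ⇑e := rfl
  have hdet : |LinearMap.det (Matrix.toLin' Q)| = 1 := by
    rw [LinearMap.det_toLin']
    have hdd : Q.det * Q.det = 1 := by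
      have hc := congrArg Matrix.det hQ
      rwa [Matrix.det_mul, Matrix.det_transpose, Matrix.det_one] at hc
    rcases mul_self_eq_one_iff.mp hdd with h | h <;> simp [h]
  have hvol : (volume : Measure (Fin m → ℝ)).map ⇑e = volume := by
    have hd0 : LinearMap.det (Matrix.toLin' Q) ≠ 0 := by
      intro h; rw [h] at hdet; simp at hdet
    have hmap := Real.map_linearMap_volume_pi_eq_smul_volume_pi hd0
    rw [abs_inv, hdet] at hmap
    have hfun : ⇑(Matrix.toLin' Q) = ⇑e := funext fun x => Matrix.toLin'_apply Q x
    rw [hfun] at hmap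
    simpa using hmap
  have hmeas_pdf := measurable_gaussianPDF 0 v
  haveI : SigmaFinite ((volume : Measure ℝ).withDensity (gaussianPDF 0 v)) := by
    rw [← gaussianReal_of_var_ne_zero 0 hv]; infer_instance
  have hGmeas : Measurable fun x : Fin m → ℝ => ∏ i, gaussianPDF 0 v (x i) :=
    Finset.measurable_prod _ fun i _ => hmeas_pdf.comp (measurable_pi_apply i)
  have hsum : ∀ x : Fin m → ℝ, ∑ i, (Qᵀ *ᵥ x) i ^ 2 = ∑ i, x i ^ 2 := by
    intro x
    have hdp : (Qᵀ *ᵥ x) ⬝ᵥ (Qᵀ *ᵥ x) = x ⬝ᵥ x := by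
      calc (Qᵀ *ᵥ x) ⬝ᵥ (Qᵀ *ᵥ x) = (x ᵥ* Q) ⬝ᵥ (Qᵀ *ᵥ x) := by rw [Matrix.mulVec_transpose]
        _ = x ⬝ᵥ (Q *ᵥ (Qᵀ *ᵥ x)) := (Matrix.dotProduct_mulVec x Q _).symm
        _ = x ⬝ᵥ x := by rw [Matrix.mulVec_mulVec, hQQt, Matrix.one_mulVec]
    simpa [dotProduct, sq] using hdp
  have key : ∀ y : Fin m → ℝ,
      (∏ i, gaussianPDF 0 v (y i))
        = ENNReal.ofReal ((Real.sqrt (2 * Real.pi * v))⁻¹ ^ m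
            * Real.exp (-(∑ i, y i ^ 2) / (2 * v))) := by
    intro y
    simp only [gaussianPDF_def]
    rw [← ENNReal.ofReal_prod_of_nonneg (fun i _ => gaussianPDFReal_nonneg 0 v (y i))]
    congr 1
    simp only [gaussianPDFReal, sub_zero]
    rw [Finset.prod_mul_distrib, Finset.prod_const, ← Real.exp_sum,
      Finset.card_univ, Fintype.card_fin]
    congr 1
    rw [← Finset.sum_div, ← Finset.sum_neg_distrib]
  have hG : (fun x : Fin m → ℝ => ∏ i, gaussianPDF 0 v (x i)) ∘ ⇑e.symm
      = fun x : Fin m → ℝ => ∏ i, gaussianPDF 0 v (x i) := by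
    funext x
    show (∏ i, gaussianPDF 0 v ((Qᵀ *ᵥ x) i)) = ∏ i, gaussianPDF 0 v (x i)
    rw [key, key, hsum]
  rw [gaussianReal_of_var_ne_zero 0 hv, pi_withDensity m _ hmeas_pdf, hcoe,
    map_withDensity_equiv volume e _ hGmeas, hvol, hG]

end KnockoffAux

open KnockoffAux

theorem knockoff_pairwise_exchangeability (n p : ℕ)
    (X Xt : Matrix (Fin n) (Fin p) ℝ) (s : Fin p → ℝ)
    (h1 : Xtᵀ * Xt = Xᵀ * X)
    (h2 : Xtᵀ * X = Xᵀ * X - Matrix.diagonal s)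
    (U : Matrix (Fin n) (Fin (n - 2 * p)) ℝ)
    (hU : Uᵀ * U = 1) (hUX : Uᵀ * X = 0) (hUXt : Uᵀ * Xt = 0)
    (β : Fin p → ℝ) (σ : NNReal)
    (S : Finset (Fin p)) (hnull : ∀ j ∈ S, β j = 0) :
    Measure.map
      (fun ε : Fin n → ℝ =>
        fun c : Fin p ⊕ Fin p ⊕ Fin (n - 2 * p) =>
          Sum.elim (fun j k => if j ∈ S then Xt k j else X k j)
            (Sum.elim (fun j k => if j ∈ S then X k j else Xt k j)
              (fun j k => U k j)) c ⬝ᵥ (X *ᵥ β + ε))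
      (Measure.pi fun _ : Fin n => gaussianReal 0 (σ ^ 2)) =
    Measure.map
      (fun ε : Fin n → ℝ =>
        fun c : Fin p ⊕ Fin p ⊕ Fin (n - 2 * p) =>
          Sum.elim (fun j k => X k j)
            (Sum.elim (fun j k => Xt k j) (fun j k => U k j)) c ⬝ᵥ (X *ᵥ β + ε))
      (Measure.pi fun _ : Fin n => gaussianReal 0 (σ ^ 2)) := by
  classical
  set V : Matrix (Fin n) (Fin p) ℝ := X - Xt with hV
  set d : Fin p → ℝ := fun j => if j ∈ S ∧ s j ≠ 0 then (s j)⁻¹ else 0 with hd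
  set D : Matrix (Fin p) (Fin p) ℝ := Matrix.diagonal d with hD
  set ind : Fin p → ℝ := fun j => if j ∈ S ∧ s j ≠ 0 then 1 else 0 with hind
  set E : Matrix (Fin p) (Fin p) ℝ := Matrix.diagonal ind with hE
  set A : Matrix (Fin n) (Fin n) ℝ := V * D * Vᵀ with hA
  set Q : Matrix (Fin n) (Fin n) ℝ := 1 - A with hQdef
  have hGsymm : (Xᵀ * X)ᵀ = Xᵀ * X := by
    rw [Matrix.transpose_mul, Matrix.transpose_transpose]
  have h2' : Xᵀ * Xt = Xᵀ * X - Matrix.diagonal s := by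
    have hc := congrArg Matrix.transpose h2
    rwa [Matrix.transpose_mul, Matrix.transpose_sub, hGsymm, Matrix.diagonal_transpose,
      Matrix.transpose_transpose] at hc
  have hVX : Vᵀ * X = Matrix.diagonal s := by
    rw [hV, Matrix.transpose_sub, Matrix.sub_mul, h2]
    abel
  have hVXt : Vᵀ * Xt = -(Matrix.diagonal s) := by
    rw [hV, Matrix.transpose_sub, Matrix.sub_mul, h2', h1]
    abel
  have hVV : Vᵀ * V = Matrix.diagonal (fun j => 2 * s j) := by
    have hstep : Vᵀ * V = Vᵀ * X - Vᵀ * Xt := by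
      conv_lhs => rw [hV]
      rw [Matrix.mul_sub]
    rw [hstep, hVX, hVXt, sub_neg_eq_add, Matrix.diagonal_add]
    refine congrArg Matrix.diagonal ?_
    funext j
    ring
  have hVU : Vᵀ * U = 0 := by
    have h0 : Uᵀ * V = 0 := by rw [hV, Matrix.mul_sub, hUX, hUXt, sub_zero]
    have hc := congrArg Matrix.transpose h0
    rwa [Matrix.transpose_mul, Matrix.transpose_transpose, Matrix.transpose_zero] at hc
  have hAsymm : Aᵀ = A := by
    rw [hA, Matrix.transpose_mul, Matrix.transpose_mul, Matrix.transpose_transpose, hD,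
      Matrix.diagonal_transpose, Matrix.mul_assoc]
  have hQsymm : Qᵀ = Q := by
    rw [hQdef, Matrix.transpose_sub, Matrix.transpose_one, hAsymm]
  have hDVD : D * Matrix.diagonal (fun j => 2 * s j) * D = D + D := by
    rw [hD, Matrix.diagonal_mul_diagonal, Matrix.diagonal_mul_diagonal, Matrix.diagonal_add]
    refine congrArg Matrix.diagonal ?_
    funext j
    by_cases hj : j ∈ S ∧ s j ≠ 0
    · simp only [hd, hj.1, hj.2, ne_eq, not_false_eq_true, and_self, if_true]
      have hsj := hj.2
      field_simp
      ring
    · simp [hd, hj]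
  have hAA : A * A = A + A := by
    have h4 : D * (Matrix.diagonal (fun j => 2 * s j) * (D * Vᵀ)) = (D + D) * Vᵀ := by
      rw [← Matrix.mul_assoc, ← Matrix.mul_assoc, hDVD]
    calc A * A = V * (D * (Vᵀ * (V * (D * Vᵀ)))) := by
          rw [hA]; simp only [Matrix.mul_assoc]
      _ = V * (D * ((Vᵀ * V) * (D * Vᵀ))) := by rw [Matrix.mul_assoc Vᵀ V (D * Vᵀ)]
      _ = V * ((D + D) * Vᵀ) := by rw [hVV, h4]
      _ = A + A := by rw [hA]; simp only [Matrix.add_mul, Matrix.mul_add, Matrix.mul_assoc]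
  have hQQ : Qᵀ * Q = 1 := by
    rw [hQsymm, hQdef]
    have hexp : (1 - A) * (1 - A) = 1 - A - A + A * A := by noncomm_ring
    rw [hexp, hAA]
    abel
  have hDdiag : D * Matrix.diagonal s = E := by
    rw [hD, hE, Matrix.diagonal_mul_diagonal]
    refine congrArg Matrix.diagonal ?_
    funext j
    by_cases hj : j ∈ S ∧ s j ≠ 0
    · simp only [hd, hind, hj.1, hj.2, ne_eq, not_false_eq_true, and_self, if_true]
      exact inv_mul_cancel₀ hj.2
    · simp [hd, hind, hj]
  have hQX : Q * X = X - V * E := by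
    rw [hQdef, Matrix.sub_mul, Matrix.one_mul, hA, Matrix.mul_assoc (V * D) Vᵀ X, hVX,
      Matrix.mul_assoc, hDdiag]
  have hQXt : Q * Xt = Xt + V * E := by
    rw [hQdef, Matrix.sub_mul, Matrix.one_mul, hA, Matrix.mul_assoc (V * D) Vᵀ Xt, hVXt,
      Matrix.mul_neg, Matrix.mul_assoc, hDdiag, sub_neg_eq_add]
  have hQU : Q * U = U := by
    rw [hQdef, Matrix.sub_mul, Matrix.one_mul, hA, Matrix.mul_assoc (V * D) Vᵀ U, hVU,
      Matrix.mul_zero, sub_zero]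
  have hs0 : ∀ j, s j = 0 → ∀ k, V k j = 0 := by
    intro j hj k
    have hdd := congrFun (congrFun hVV j) j
    rw [Matrix.mul_apply, Matrix.diagonal_apply_eq] at hdd
    have hzero : ∑ k, V k j * V k j = 0 := by
      have : ∀ k, Vᵀ j k * V k j = V k j * V k j := fun k => by rw [Matrix.transpose_apply]
      rw [← Finset.sum_congr rfl fun k _ => this k, hdd, hj, mul_zero]
    exact mul_self_eq_zero.mp
      ((Finset.sum_eq_zero_iff_of_nonneg fun k _ => mul_self_nonneg (V k j)).mp hzero k
        (Finset.mem_univ k))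
  have hswapX : ∀ k j, (if j ∈ S then Xt k j else X k j) = (Q * X) k j := by
    intro k j
    rw [hQX, Matrix.sub_apply, hE, Matrix.mul_diagonal]
    by_cases hj : j ∈ S
    · by_cases hsj : s j = 0
      · have h0 : V k j = 0 := hs0 j hsj k
        have hXXt : X k j - Xt k j = 0 := by
          have : V k j = X k j - Xt k j := by rw [hV, Matrix.sub_apply]
          rw [← this, h0]
        simp only [hind, hj, hsj, ne_eq, not_true_eq_false, and_false, if_false, if_true,
          mul_zero, sub_zero]
        linarith
      · have hVkj : V k j = X k j - Xt k j := by rw [hV, Matrix.sub_apply]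
        simp only [hind, hj, hsj, ne_eq, not_false_eq_true, and_self, if_true,
          mul_one, hVkj]
        ring
    · simp [hind, hj]
  have hswapXt : ∀ k j, (if j ∈ S then X k j else Xt k j) = (Q * Xt) k j := by
    intro k j
    rw [hQXt, Matrix.add_apply, hE, Matrix.mul_diagonal]
    by_cases hj : j ∈ S
    · by_cases hsj : s j = 0
      · have h0 : V k j = 0 := hs0 j hsj k
        have hXXt : X k j - Xt k j = 0 := by
          have : V k j = X k j - Xt k j := by rw [hV, Matrix.sub_apply]
          rw [← this, h0]
        simp only [hind, hj, hsj, ne_eq, not_true_eq_false, and_false, if_false, if_true,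
          mul_zero, add_zero]
        linarith
      · have hVkj : V k j = X k j - Xt k j := by rw [hV, Matrix.sub_apply]
        simp only [hind, hj, hsj, ne_eq, not_false_eq_true, and_self, if_true,
          mul_one, hVkj]
        ring
    · simp [hind, hj]
  have hQXβ : Q *ᵥ (X *ᵥ β) = X *ᵥ β := by
    rw [Matrix.mulVec_mulVec, hQX, Matrix.sub_mulVec]
    have hEβ : E *ᵥ β = 0 := by
      funext j
      rw [hE, Matrix.mulVec_diagonal]
      by_cases hj : j ∈ S ∧ s j ≠ 0
      · rw [hnull j hj.1]
        simp
      · simp [hind, hj]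
    rw [← Matrix.mulVec_mulVec, hEβ, Matrix.mulVec_zero, sub_zero]
  -- column action of Q
  have hmulcol : ∀ {q : ℕ} (M : Matrix (Fin n) (Fin q) ℝ) (j : Fin q),
      Q *ᵥ (fun k => M k j) = fun k => (Q * M) k j := by
    intro q M j
    funext k
    simp [Matrix.mulVec, Matrix.mul_apply, dotProduct]
  have hdotQ : ∀ (u w : Fin n → ℝ), u ⬝ᵥ (Q *ᵥ w) = (Q *ᵥ u) ⬝ᵥ w := by
    intro u w
    rw [Matrix.dotProduct_mulVec]
    congr 1
    rw [← Matrix.mulVec_transpose, hQsymm]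
  have hfe : (fun ε : Fin n → ℝ =>
        fun c : Fin p ⊕ Fin p ⊕ Fin (n - 2 * p) =>
          Sum.elim (fun j k => if j ∈ S then Xt k j else X k j)
            (Sum.elim (fun j k => if j ∈ S then X k j else Xt k j)
              (fun j k => U k j)) c ⬝ᵥ (X *ᵥ β + ε))
      = (fun ε : Fin n → ℝ =>
        fun c : Fin p ⊕ Fin p ⊕ Fin (n - 2 * p) =>
          Sum.elim (fun j k => X k j)
            (Sum.elim (fun j k => Xt k j) (fun j k => U k j)) c ⬝ᵥ (X *ᵥ β + ε))
        ∘ (fun ε => Q *ᵥ ε) := by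
    funext ε
    funext c
    show _ = Sum.elim _ _ c ⬝ᵥ (X *ᵥ β + Q *ᵥ ε)
    have hmean : X *ᵥ β + Q *ᵥ ε = Q *ᵥ (X *ᵥ β + ε) := by
      rw [Matrix.mulVec_add, hQXβ]
    rw [hmean, hdotQ]
    congr 1
    cases c with
    | inl j =>
        show (fun k => if j ∈ S then Xt k j else X k j) = Q *ᵥ (fun k => X k j)
        rw [hmulcol X j]
        funext k
        exact hswapX k j
    | inr c =>
        cases c with
        | inl j =>
            show (fun k => if j ∈ S then X k j else Xt k j) = Q *ᵥ (fun k => Xt k j)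
            rw [hmulcol Xt j]
            funext k
            exact hswapXt k j
        | inr j =>
            show (fun k => U k j) = Q *ᵥ (fun k => U k j)
            rw [hmulcol U j, hQU]
  have hplain_meas : Measurable (fun ε : Fin n → ℝ =>
      fun c : Fin p ⊕ Fin p ⊕ Fin (n - 2 * p) =>
        Sum.elim (fun j k => X k j)
          (Sum.elim (fun j k => Xt k j) (fun j k => U k j)) c ⬝ᵥ (X *ᵥ β + ε)) := by
    refine measurable_pi_iff.2 fun c => ?_
    simp only [dotProduct, Pi.add_apply]
    exact Finset.measurable_sum _ fun k _ =>
      (((measurable_pi_apply (X := fun _ : Fin n => ℝ) k).const_add ((X *ᵥ β) k)).const_mul _)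
  rw [hfe, ← Measure.map_map hplain_meas (measurable_mulVec Q),
    gaussian_pi_map_orthogonal n (σ ^ 2) Q hQQ]
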